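/- Let G be a connected chordal graph and let s, t be distinct vertices with d = dist_G(s, t). Then for every 0 ≤ i ≤ d, the set D_i is a clique of G, i.e., any two distinct vertices of D_i are adjacent in G. -/
import Mathlib

/-- A graph is chordal if it has no induced cycle of length at least 4, i.e. no induced
subgraph isomorphic to `cycleGraph n` with `n ≥ 4`. -/
def SimpleGraph.IsChordal {V : Type*} (G : SimpleGraph V) : Prop :=
  ∀ n : ℕ, 4 ≤ n → IsEmpty (SimpleGraph.cycleGraph n ↪g G)

/-- `D_i`: the vertices at distance `i` from `s` and distance `d - i` from `t`,
where `d = dist_G(s, t)`. -/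
def SimpleGraph.levelSet {V : Type*} (G : SimpleGraph V) (s t : V) (i : ℕ) : Set V :=
  {v | G.dist s v = i ∧ G.dist v t = G.dist s t - i}

open SimpleGraph

namespace Stmt8Aux

theorem fin_sub_val_one {n : ℕ} (hn : 2 ≤ n) (k k' : Fin n) :
    (k - k').val = 1 ↔ (k.val = k'.val + 1 ∨ (k'.val = n - 1 ∧ k.val = 0)) := by
  rw [Fin.sub_def]
  simp only [Fin.val_mk]
  have h1 := k.isLt; have h2 := k'.isLt
  rcases Nat.lt_or_ge (n - k'.val + k.val) n with h | h
  · rw [Nat.mod_eq_of_lt h]; omega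
  · have hlt : n - k'.val + k.val - n < n := by omega
    rw [Nat.mod_eq_sub_mod h, Nat.mod_eq_of_lt hlt]; omega

variable {V : Type*}
structure Cfg (G : SimpleGraph V) where
  lv : V → ℤ
  hlv : ∀ x y : V, G.Adj x y → lv x ≤ lv y + 1
  f : ℕ → V
  g : ℕ → V
  L : ℕ
  I : ℕ
  hIL : I ≤ L
  hne : f I ≠ g I
  hnadj : ¬ G.Adj (f I) (g I)
  hf : ∀ m < L, G.Adj (f m) (f (m + 1))
  hg : ∀ m < L, G.Adj (g m) (g (m + 1))
  hlf : ∀ m ≤ L, lv (f m) = lv (f 0) + m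
  hlg : ∀ m ≤ L, lv (g m) = lv (g 0) + m
  hl0 : lv (f 0) = lv (g 0)
  hstart : f 0 = g 0 ∨ G.Adj (f 0) (g 0)
  hend : f L = g L ∨ G.Adj (f L) (g L)
  hcross : ∀ m ≤ L, ∀ m' ≤ L, f m = g m' → (m = 0 ∧ m' = 0) ∨ (m = L ∧ m' = L)
namespace Cfg
variable {G : SimpleGraph V} (c : Cfg G)
def Allowed (m m' : ℕ) : Prop :=
  (m = 0 ∧ m' = 0) ∨ (m = c.L ∧ m' = c.L) ∨
  (c.f 0 = c.g 0 ∧ ((m = 0 ∧ m' = 1) ∨ (m = 1 ∧ m' = 0))) ∨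
  (c.f c.L = c.g c.L ∧ ((m = c.L ∧ m' + 1 = c.L) ∨ (m + 1 = c.L ∧ m' = c.L)))
def Chord (m m' : ℕ) : Prop :=
  m ≤ c.L ∧ m' ≤ c.L ∧ G.Adj (c.f m) (c.g m') ∧ ¬ c.Allowed m m'
open scoped Classical in
noncomputable def aa : ℕ := if c.f 0 = c.g 0 then 0 else 1
open scoped Classical in
noncomputable def bb : ℕ := if c.f c.L = c.g c.L then 0 else 1
noncomputable def meas : ℕ := 2 * c.L + c.aa + c.bb

def swap : Cfg G where
  lv := c.lv
  hlv := c.hlv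
  f := c.g
  g := c.f
  L := c.L
  I := c.I
  hIL := c.hIL
  hne := fun h => c.hne h.symm
  hnadj := fun h => c.hnadj h.symm
  hf := c.hg
  hg := c.hf
  hlf := c.hlg
  hlg := c.hlf
  hl0 := c.hl0.symm
  hstart := c.hstart.imp Eq.symm Adj.symm
  hend := c.hend.imp Eq.symm Adj.symm
  hcross := fun m hm m' hm' h => by
    rcases c.hcross m' hm' m hm h.symm with ⟨h1, h2⟩ | ⟨h1, h2⟩
    exacts [Or.inl ⟨h2, h1⟩, Or.inr ⟨h2, h1⟩]

def reverse : Cfg G where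
  lv := fun x => - c.lv x
  hlv := fun x y h => by
    show - c.lv x ≤ - c.lv y + 1
    have := c.hlv y x h.symm; omega
  f := fun r => c.f (c.L - r)
  g := fun r => c.g (c.L - r)
  L := c.L
  I := c.L - c.I
  hIL := Nat.sub_le _ _
  hne := by simpa [Nat.sub_sub_self c.hIL] using c.hne
  hnadj := by simpa [Nat.sub_sub_self c.hIL] using c.hnadj
  hf := fun m hm => by
    have h := (c.hf (c.L - m - 1) (by omega)).symm
    have h1 : c.L - m - 1 + 1 = c.L - m := by omega
    have h2 : c.L - (m + 1) = c.L - m - 1 := by omega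
    rw [h1] at h
    show G.Adj (c.f (c.L - m)) (c.f (c.L - (m + 1)))
    rw [h2]; exact h
  hg := fun m hm => by
    have h := (c.hg (c.L - m - 1) (by omega)).symm
    have h1 : c.L - m - 1 + 1 = c.L - m := by omega
    have h2 : c.L - (m + 1) = c.L - m - 1 := by omega
    rw [h1] at h
    show G.Adj (c.g (c.L - m)) (c.g (c.L - (m + 1)))
    rw [h2]; exact h
  hlf := fun m hm => by
    have h1 := c.hlf (c.L - m) (by omega)
    have h2 := c.hlf c.L le_rfl
    simp only [Nat.sub_zero]
    omega
  hlg := fun m hm => by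
    have h1 := c.hlg (c.L - m) (by omega)
    have h2 := c.hlg c.L le_rfl
    simp only [Nat.sub_zero]
    omega
  hl0 := by
    have h1 := c.hlf c.L le_rfl
    have h2 := c.hlg c.L le_rfl
    have h3 := c.hl0
    simp only [Nat.sub_zero]
    omega
  hstart := by simpa only [Nat.sub_zero] using c.hend
  hend := by simpa only [Nat.sub_self] using c.hstart
  hcross := fun m hm m' hm' h => by
    rcases c.hcross _ (Nat.sub_le _ _) _ (Nat.sub_le _ _) h with ⟨h1, h2⟩ | ⟨h1, h2⟩
    · exact Or.inr ⟨by omega, by omega⟩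
    · exact Or.inl ⟨by omega, by omega⟩

lemma aa_of_eq (h : c.f 0 = c.g 0) : c.aa = 0 := by unfold aa; exact if_pos h
lemma aa_of_ne (h : c.f 0 ≠ c.g 0) : c.aa = 1 := by unfold aa; exact if_neg h
lemma bb_of_eq (h : c.f c.L = c.g c.L) : c.bb = 0 := by unfold bb; exact if_pos h
lemma bb_of_ne (h : c.f c.L ≠ c.g c.L) : c.bb = 1 := by unfold bb; exact if_neg h
lemma aa_le_one : c.aa ≤ 1 := by unfold aa; split <;> omega
lemma bb_le_one : c.bb ≤ 1 := by unfold bb; split <;> omega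

lemma meas_swap : c.swap.meas = c.meas := by
  have h1 : c.swap.aa = c.aa := by
    by_cases h : c.f 0 = c.g 0
    · rw [c.aa_of_eq h, aa_of_eq]; exact h.symm
    · rw [c.aa_of_ne h, aa_of_ne]; exact fun hh => h hh.symm
  have h2 : c.swap.bb = c.bb := by
    by_cases h : c.f c.L = c.g c.L
    · rw [c.bb_of_eq h, bb_of_eq]; exact h.symm
    · rw [c.bb_of_ne h, bb_of_ne]; exact fun hh => h hh.symm
  show 2 * c.L + c.swap.aa + c.swap.bb = 2 * c.L + c.aa + c.bb
  rw [h1, h2]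

lemma meas_reverse : c.reverse.meas = c.meas := by
  have e1 : c.reverse.f c.reverse.L = c.f 0 := by
    show c.f (c.L - c.L) = c.f 0
    rw [Nat.sub_self]
  have e2 : c.reverse.g c.reverse.L = c.g 0 := by
    show c.g (c.L - c.L) = c.g 0
    rw [Nat.sub_self]
  have h1 : c.reverse.aa = c.bb := by
    by_cases h : c.f c.L = c.g c.L
    · rw [c.bb_of_eq h, aa_of_eq]; exact h
    · rw [c.bb_of_ne h, aa_of_ne]; exact h
  have h2 : c.reverse.bb = c.aa := by
    by_cases h : c.f 0 = c.g 0
    · rw [c.aa_of_eq h, bb_of_eq]; rw [e1, e2]; exact h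
    · rw [c.aa_of_ne h, bb_of_ne]; rw [e1, e2]; exact h
  show 2 * c.reverse.L + c.reverse.aa + c.reverse.bb = 2 * c.L + c.aa + c.bb
  rw [h1, h2]; show 2 * c.L + _ + _ = _; omega

lemma chord_swap {m m' : ℕ} (h : c.Chord m m') : c.swap.Chord m' m := by
  obtain ⟨hm, hm', hadj, hal⟩ := h
  refine ⟨hm', hm, hadj.symm, fun hA => hal ?_⟩
  simp only [Allowed, swap] at hA ⊢
  tauto

lemma chord_reverse {m m' : ℕ} (h : c.Chord m m') : c.reverse.Chord (c.L - m) (c.L - m') := by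
  obtain ⟨hm, hm', hadj, hal⟩ := h
  refine ⟨Nat.sub_le _ _, Nat.sub_le _ _, ?_, fun hA => hal ?_⟩
  · show G.Adj (c.f (c.L - (c.L - m))) (c.g (c.L - (c.L - m')))
    rw [Nat.sub_sub_self hm, Nat.sub_sub_self hm']
    exact hadj
  · simp only [Allowed, reverse, Nat.sub_zero, Nat.sub_self] at hA
    unfold Allowed
    rcases hA with ⟨h1, h2⟩ | ⟨h1, h2⟩ | ⟨he, hA⟩ | ⟨he, hA⟩
    · exact Or.inr (Or.inl ⟨by omega, by omega⟩)
    · exact Or.inl ⟨by omega, by omega⟩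
    · refine Or.inr (Or.inr (Or.inr ⟨he, ?_⟩))
      rcases hA with ⟨h1, h2⟩ | ⟨h1, h2⟩
      · exact Or.inl ⟨by omega, by omega⟩
      · exact Or.inr ⟨by omega, by omega⟩
    · refine Or.inr (Or.inr (Or.inl ⟨he, ?_⟩))
      rcases hA with ⟨h1, h2⟩ | ⟨h1, h2⟩
      · exact Or.inl ⟨by omega, by omega⟩
      · exact Or.inr ⟨by omega, by omega⟩

lemma I_pos : 1 ≤ c.I := by
  by_contra h
  have h0 : c.I = 0 := by omega
  rcases c.hstart with h' | h'
  · exact c.hne (h0 ▸ h')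
  · exact c.hnadj (h0 ▸ h')

lemma I_lt : c.I < c.L := by
  rcases Nat.lt_or_ge c.I c.L with h | h
  · exact h
  · have h0 : c.I = c.L := le_antisymm c.hIL h
    rcases c.hend with h' | h'
    · exact absurd (h0 ▸ h') c.hne
    · exact absurd (h0 ▸ h') c.hnadj

lemma injg {m m' : ℕ} (hm : m ≤ c.L) (hm' : m' ≤ c.L) (h : c.g m = c.g m') : m = m' := by
  have e1 := c.hlg m hm
  have e2 := c.hlg m' hm'
  rw [h] at e1; omega

lemma chord_close {m m' : ℕ} (h : c.Chord m m') : m' ≤ m + 1 ∧ m ≤ m' + 1 := by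
  obtain ⟨hm, hm', hadj, -⟩ := h
  have e1 := c.hlf m hm
  have e2 := c.hlg m' hm'
  have e3 := c.hlv _ _ hadj
  have e4 := c.hlv _ _ hadj.symm
  have e5 := c.hl0
  omega

lemma chord_ne_II {m m' : ℕ} (h : c.Chord m m') : ¬(m = c.I ∧ m' = c.I) := by
  rintro ⟨rfl, rfl⟩
  exact c.hnadj h.2.2.1

lemma descent_same {m : ℕ} (h : c.Chord m m) (hI : c.I < m) :
    ∃ c' : Cfg G, c'.meas < c.meas := by
  obtain ⟨hm, hm', hadj, hal⟩ := h
  have hIpos := c.I_pos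
  have hmL : m < c.L := by
    rcases Nat.lt_or_ge m c.L with h' | h'
    · exact h'
    · exfalso; exact hal (Or.inr (Or.inl ⟨by omega, by omega⟩))
  have hne2 : c.f m ≠ c.g m := by
    intro hEq
    rcases c.hcross m (by omega) m (by omega) hEq with ⟨h1, h2⟩ | ⟨h1, h2⟩
    · omega
    · exact hal (Or.inr (Or.inl ⟨h1, h2⟩))
  have hcross2 : ∀ r ≤ m, ∀ r' ≤ m, c.f r = c.g r' → (r = 0 ∧ r' = 0) ∨ (r = m ∧ r' = m) := by
    intro r hr r' hr' hEq
    rcases c.hcross r (by omega) r' (by omega) hEq with ⟨h1, h2⟩ | ⟨h1, h2⟩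
    · exact Or.inl ⟨h1, h2⟩
    · exfalso; omega
  let c2 : Cfg G :=
    { lv := c.lv, hlv := c.hlv, f := c.f, g := c.g, L := m, I := c.I,
      hIL := le_of_lt hI, hne := c.hne, hnadj := c.hnadj,
      hf := fun r hr => c.hf r (by omega),
      hg := fun r hr => c.hg r (by omega),
      hlf := fun r hr => c.hlf r (by omega),
      hlg := fun r hr => c.hlg r (by omega),
      hl0 := c.hl0, hstart := c.hstart, hend := Or.inr hadj,
      hcross := hcross2 }
  refine ⟨c2, ?_⟩
  have haa : c2.aa = c.aa := by
    by_cases h0 : c.f 0 = c.g 0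
    · rw [aa_of_eq c2 h0, aa_of_eq c h0]
    · rw [aa_of_ne c2 h0, aa_of_ne c h0]
  have hbb : c2.bb = 1 := bb_of_ne c2 hne2
  have hL2 : c2.L = m := rfl
  show 2 * c2.L + c2.aa + c2.bb < 2 * c.L + c.aa + c.bb
  rw [haa, hbb, hL2]
  omega

lemma descent_up {m : ℕ} (h : c.Chord m (m + 1)) (hI : c.I ≤ m) :
    ∃ c' : Cfg G, c'.meas < c.meas := by
  obtain ⟨hm, hm', hadj, hal⟩ := h
  have hIpos := c.I_pos
  have hmL : m + 1 ≤ c.L := hm'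
  let f2 : ℕ → V := fun r => if r ≤ m then c.f r else c.g (m + 1)
  have hf2low : ∀ r ≤ m, f2 r = c.f r := fun r hr => if_pos hr
  have hf2hi : f2 (m + 1) = c.g (m + 1) := if_neg (by omega)
  have hcross2 : ∀ r ≤ m + 1, ∀ r' ≤ m + 1, f2 r = c.g r' →
      (r = 0 ∧ r' = 0) ∨ (r = m + 1 ∧ r' = m + 1) := by
    intro r hr r' hr' hEq
    rcases Nat.lt_or_ge m r with h' | h'
    · have hr1 : r = m + 1 := by omega
      rw [hr1, hf2hi] at hEq
      have := c.injg (by omega) (by omega) hEq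
      exact Or.inr ⟨hr1, by omega⟩
    · rw [hf2low r h'] at hEq
      rcases c.hcross r (by omega) r' (by omega) hEq with ⟨h1, h2⟩ | ⟨h1, h2⟩
      · exact Or.inl ⟨h1, h2⟩
      · exfalso; omega
  let c2 : Cfg G :=
    { lv := c.lv, hlv := c.hlv, f := f2, g := c.g, L := m + 1, I := c.I,
      hIL := by omega,
      hne := by rw [hf2low c.I hI]; exact c.hne,
      hnadj := by rw [hf2low c.I hI]; exact c.hnadj,
      hf := by
        intro r hr
        rcases Nat.lt_or_ge r m with h' | h'
        · rw [hf2low r (by omega), hf2low (r + 1) (by omega)]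
          exact c.hf r (by omega)
        · have hr1 : r = m := by omega
          rw [hr1, hf2low m le_rfl, hf2hi]
          exact hadj,
      hg := fun r hr => c.hg r (by omega),
      hlf := by
        intro r hr
        rw [hf2low 0 (by omega)]
        rcases Nat.lt_or_ge m r with h' | h'
        · have hr1 : r = m + 1 := by omega
          rw [hr1, hf2hi]
          have := c.hlg (m + 1) (by omega)
          have := c.hl0
          omega
        · rw [hf2low r h']
          exact c.hlf r (by omega),
      hlg := fun r hr => c.hlg r (by omega),
      hl0 := by rw [hf2low 0 (by omega)]; exact c.hl0,
      hstart := by rw [hf2low 0 (by omega)]; exact c.hstart,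
      hend := by rw [hf2hi]; exact Or.inl rfl,
      hcross := hcross2 }
  refine ⟨c2, ?_⟩
  have haa : c2.aa = c.aa := by
    have e0 : c2.f 0 = c.f 0 := hf2low 0 (by omega)
    by_cases h0 : c.f 0 = c.g 0
    · rw [aa_of_eq c2 (by rw [show c2.f 0 = c.f 0 from e0]; exact h0), aa_of_eq c h0]
    · rw [aa_of_ne c2 (by rw [show c2.f 0 = c.f 0 from e0]; exact h0), aa_of_ne c h0]
  have hbb : c2.bb = 0 := bb_of_eq c2 hf2hi
  have hL2 : c2.L = m + 1 := rfl
  have hlast : m + 1 < c.L ∨ c.bb = 1 := by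
    rcases Nat.lt_or_ge (m + 1) c.L with h' | h'
    · exact Or.inl h'
    · have hmeq : m + 1 = c.L := by omega
      by_cases h0 : c.f c.L = c.g c.L
      · exfalso
        exact hal (Or.inr (Or.inr (Or.inr ⟨h0, Or.inr ⟨hmeq, by omega⟩⟩)))
      · exact Or.inr (bb_of_ne c h0)
  show 2 * c2.L + c2.aa + c2.bb < 2 * c.L + c.aa + c.bb
  rw [haa, hbb, hL2]
  omega


lemma descent_up_any {m : ℕ} (h : c.Chord m (m + 1)) : ∃ c' : Cfg G, c'.meas < c.meas := by
  rcases le_or_gt c.I m with hI | hI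
  · exact c.descent_up h hI
  · have hm1 : m + 1 ≤ c.L := h.2.1
    have h2 := (c.reverse).chord_swap (c.chord_reverse h)
    have e : c.L - m = (c.L - (m + 1)) + 1 := by omega
    rw [e] at h2
    have hI2 : (c.reverse.swap).I ≤ c.L - (m + 1) := by
      show c.L - c.I ≤ c.L - (m + 1)
      have := c.hIL
      omega
    obtain ⟨c', hc'⟩ := (c.reverse.swap).descent_up h2 hI2
    refine ⟨c', ?_⟩
    calc c'.meas < c.reverse.swap.meas := hc'
    _ = c.reverse.meas := c.reverse.meas_swap
    _ = c.meas := c.meas_reverse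

lemma descent_same_any {m : ℕ} (h : c.Chord m m) : ∃ c' : Cfg G, c'.meas < c.meas := by
  have hne := c.chord_ne_II h
  have hmL : m ≤ c.L := h.1
  rcases Nat.lt_trichotomy c.I m with hI | hI | hI
  · exact c.descent_same h hI
  · exact absurd ⟨hI.symm, hI.symm⟩ hne
  · have h2 := c.chord_reverse h
    have hI2 : c.reverse.I < c.L - m := by
      show c.L - c.I < c.L - m
      have := c.I_lt
      omega
    obtain ⟨c', hc'⟩ := (c.reverse).descent_same h2 hI2
    exact ⟨c', by rw [c.meas_reverse] at hc'; exact hc'⟩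

lemma descent {m m' : ℕ} (h : c.Chord m m') : ∃ c' : Cfg G, c'.meas < c.meas := by
  have hc := c.chord_close h
  rcases Nat.lt_trichotomy m m' with h1 | h1 | h1
  · have e : m' = m + 1 := by omega
    exact c.descent_up_any (e ▸ h)
  · exact c.descent_same_any (h1 ▸ h)
  · have e : m = m' + 1 := by omega
    have h2 := c.chord_swap h
    rw [e] at h2
    obtain ⟨c', hc'⟩ := (c.swap).descent_up_any h2
    exact ⟨c', by rw [c.meas_swap] at hc'; exact hc'⟩

lemma meas_ge_four : 4 ≤ c.meas := by
  have h1 := c.I_pos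
  have h2 := c.I_lt
  have h3 := c.hIL
  show 4 ≤ 2 * c.L + c.aa + c.bb
  omega

lemma embedding_of_no_chord (hnc : ∀ m m', ¬ c.Chord m m') :
    Nonempty (cycleGraph c.meas ↪g G) := by
  classical
  have hLI := c.I_pos
  have hIlt := c.I_lt
  have hIL := c.hIL
  have hL2 : 2 ≤ c.L := by omega
  have ha1 := c.aa_le_one
  have hb1 := c.bb_le_one
  have hAllowed : ∀ m ≤ c.L, ∀ m' ≤ c.L, G.Adj (c.f m) (c.g m') → c.Allowed m m' := by
    intro m hm m' hm' hadj
    by_contra hA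
    exact hnc m m' ⟨hm, hm', hadj, hA⟩
  have haa : (c.aa = 0 ∧ c.f 0 = c.g 0) ∨ (c.aa = 1 ∧ c.f 0 ≠ c.g 0 ∧ G.Adj (c.f 0) (c.g 0)) := by
    by_cases h : c.f 0 = c.g 0
    · exact Or.inl ⟨c.aa_of_eq h, h⟩
    · exact Or.inr ⟨c.aa_of_ne h, h, c.hstart.resolve_left h⟩
  have hbb : (c.bb = 0 ∧ c.f c.L = c.g c.L) ∨
      (c.bb = 1 ∧ c.f c.L ≠ c.g c.L ∧ G.Adj (c.f c.L) (c.g c.L)) := by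
    by_cases h : c.f c.L = c.g c.L
    · exact Or.inl ⟨c.bb_of_eq h, h⟩
    · exact Or.inr ⟨c.bb_of_ne h, h, c.hend.resolve_left h⟩
  have hnval : c.meas = 2 * c.L + c.aa + c.bb := rfl
  set n := c.meas with hn
  have hn4 : 4 ≤ n := c.meas_ge_four
  set F : ℕ → V := fun r => if r ≤ c.L then c.f r else c.g (2 * c.L + c.bb - r) with hF
  have hFlow : ∀ r, r ≤ c.L → F r = c.f r := fun r hr => if_pos hr
  have hFhigh : ∀ r, c.L < r → F r = c.g (2 * c.L + c.bb - r) := fun r hr => if_neg (by omega)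
  -- the key mixed-adjacency analysis
  have hmix : ∀ r r', r ≤ c.L → c.L < r' → r' < n → G.Adj (c.f r) (c.g (2 * c.L + c.bb - r')) →
      (r' = r + 1 ∨ (r = 0 ∧ r' = n - 1)) := by
    intro r r' hr hr' hr'n hadj
    have hjL : 2 * c.L + c.bb - r' ≤ c.L := by omega
    rcases hAllowed r hr _ hjL hadj with ⟨h1, h2⟩ | ⟨h1, h2⟩ | ⟨he, hA⟩ | ⟨he, hA⟩
    · rcases haa with ⟨ha0, hfg⟩ | ⟨ha1', -⟩
      · exfalso
        rw [h1, h2] at hadj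
        rw [hfg] at hadj
        exact G.irrefl hadj
      · exact Or.inr ⟨h1, by omega⟩
    · -- r = L, j = L : forces bb = 1, r' = L + 1
      rcases hbb with ⟨hb0, hfg⟩ | ⟨hb1', -⟩
      · exfalso
        rw [h1, h2] at hadj
        rw [hfg] at hadj
        exact G.irrefl hadj
      · exact Or.inl (by omega)
    · rcases haa with ⟨ha0, -⟩ | ⟨ha1', hne', -⟩
      · rcases hA with ⟨h1, h2⟩ | ⟨h1, h2⟩
        · exact Or.inr ⟨h1, by omega⟩
        · exfalso; omega
      · exact absurd he hne'
    · rcases hbb with ⟨hb0, -⟩ | ⟨hb1', hne', -⟩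
      · rcases hA with ⟨h1, h2⟩ | ⟨h1, h2⟩
        · exact Or.inl (by omega)
        · exfalso; omega
      · exact absurd he hne'
  -- injectivity
  have hmixinj : ∀ r r', r ≤ c.L → c.L < r' → r' < n → F r = F r' → False := by
    intro r r' hr hr' hr'n hEq
    rw [hFlow r hr, hFhigh r' hr'] at hEq
    rcases c.hcross r hr _ (by omega) hEq with ⟨h1, h2⟩ | ⟨h1, h2⟩
    · rcases haa with ⟨ha0, -⟩ | ⟨ha1', hne', -⟩
      · omega
      · rw [h1, h2] at hEq
        exact hne' hEq
    · rcases hbb with ⟨hb0, -⟩ | ⟨hb1', hne', -⟩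
      · omega
      · rw [h1, h2] at hEq
        exact hne' hEq
  have Finj : ∀ r, r < n → ∀ r', r' < n → F r = F r' → r = r' := by
    intro r hrn r' hr'n hEq
    rcases le_or_gt r c.L with hr | hr <;> rcases le_or_gt r' c.L with hr' | hr'
    · rw [hFlow r hr, hFlow r' hr'] at hEq
      have e1 := c.hlf r hr
      have e2 := c.hlf r' hr'
      rw [hEq] at e1; omega
    · exact absurd hEq (by intro h; exact hmixinj r r' hr hr' hr'n h)
    · exact absurd hEq.symm (by intro h; exact hmixinj r' r hr' hr hrn h)
    · rw [hFhigh r hr, hFhigh r' hr'] at hEq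
      have e1 := c.hlg _ (show 2 * c.L + c.bb - r ≤ c.L by omega)
      have e2 := c.hlg _ (show 2 * c.L + c.bb - r' ≤ c.L by omega)
      rw [hEq] at e1; omega
  -- forward adjacency along the cycle
  have Fsucc : ∀ r, r + 1 < n → G.Adj (F r) (F (r + 1)) := by
    intro r hrn
    rcases Nat.lt_trichotomy r c.L with hr | hr | hr
    · rw [hFlow r (by omega), hFlow (r + 1) (by omega)]
      exact c.hf r hr
    · rw [hFlow r (by omega), hFhigh (r + 1) (by omega), hr]
      have e : 2 * c.L + c.bb - (c.L + 1) = c.L + c.bb - 1 := by omega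
      rw [e]
      rcases hbb with ⟨hb0, hfg⟩ | ⟨hb1', -, hadj⟩
      · rw [hb0, hfg]
        have e2 : c.L + 0 - 1 = c.L - 1 := by omega
        rw [e2]
        have h3 := (c.hg (c.L - 1) (by omega)).symm
        have e3 : c.L - 1 + 1 = c.L := by omega
        rw [e3] at h3
        exact h3
      · rw [hb1']
        have e2 : c.L + 1 - 1 = c.L := by omega
        rw [e2]
        exact hadj
    · rw [hFhigh r hr, hFhigh (r + 1) (by omega)]
      have e : 2 * c.L + c.bb - (r + 1) + 1 = 2 * c.L + c.bb - r := by omega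
      have := (c.hg (2 * c.L + c.bb - (r + 1)) (by omega)).symm
      rw [e] at this
      exact this
  have Fwrap : G.Adj (F (n - 1)) (F 0) := by
    have hn1 : c.L < n - 1 := by omega
    rw [hFhigh (n - 1) hn1, hFlow 0 (by omega)]
    rcases haa with ⟨ha0, hfg⟩ | ⟨ha1', -, hadj⟩
    · have e : 2 * c.L + c.bb - (n - 1) = 1 := by omega
      rw [e, hfg]
      exact (c.hg 0 (by omega)).symm
    · have e : 2 * c.L + c.bb - (n - 1) = 0 := by omega
      rw [e]
      exact hadj.symm
  -- backward adjacency analysis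
  have Frev : ∀ r, r < n → ∀ r', r' < n → G.Adj (F r) (F r') →
      (r' = r + 1 ∨ r = r' + 1 ∨ (r = 0 ∧ r' = n - 1) ∨ (r' = 0 ∧ r = n - 1)) := by
    intro r hrn r' hr'n hadj
    rcases le_or_gt r c.L with hr | hr <;> rcases le_or_gt r' c.L with hr' | hr'
    · rw [hFlow r hr, hFlow r' hr'] at hadj
      have e1 := c.hlf r hr
      have e2 := c.hlf r' hr'
      have e3 := c.hlv _ _ hadj
      have e4 := c.hlv _ _ hadj.symm
      have e5 : r ≠ r' := by
        intro h; rw [h] at hadj; exact G.irrefl hadj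
      omega
    · rw [hFlow r hr, hFhigh r' hr'] at hadj
      rcases hmix r r' hr hr' hr'n hadj with h | ⟨h1, h2⟩
      · exact Or.inl h
      · exact Or.inr (Or.inr (Or.inl ⟨h1, h2⟩))
    · rw [hFlow r' hr', hFhigh r hr] at hadj
      rcases hmix r' r hr' hr hrn hadj.symm with h | ⟨h1, h2⟩
      · exact Or.inr (Or.inl h)
      · exact Or.inr (Or.inr (Or.inr ⟨h1, h2⟩))
    · rw [hFhigh r hr, hFhigh r' hr'] at hadj
      have e1 := c.hlg _ (show 2 * c.L + c.bb - r ≤ c.L by omega)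
      have e2 := c.hlg _ (show 2 * c.L + c.bb - r' ≤ c.L by omega)
      have e3 := c.hlv _ _ hadj
      have e4 := c.hlv _ _ hadj.symm
      have e5 : 2 * c.L + c.bb - r ≠ 2 * c.L + c.bb - r' := by
        intro h; rw [h] at hadj; exact G.irrefl hadj
      omega
  -- assemble the embedding
  have hn2 : 2 ≤ n := by omega
  refine ⟨⟨⟨fun k => F k.val, ?_⟩, ?_⟩⟩
  · intro k k' hEq
    exact Fin.ext (Finj k.val k.isLt k'.val k'.isLt hEq)
  · intro k k'
    rw [cycleGraph_adj', fin_sub_val_one hn2, fin_sub_val_one hn2]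
    constructor
    · intro hadj
      have := Frev k.val k.isLt k'.val k'.isLt hadj
      omega
    · intro h
      have hk := k.isLt
      have hk' := k'.isLt
      show G.Adj (F k.val) (F k'.val)
      rcases h with (h | ⟨h1, h2⟩) | (h | ⟨h1, h2⟩)
      · have h3 := Fsucc k'.val (by omega)
        rw [← h] at h3
        exact h3.symm
      · rw [h1, h2]
        exact Fwrap.symm
      · have h3 := Fsucc k.val (by omega)
        rw [← h] at h3
        exact h3
      · rw [h1, h2]
        exact Fwrap

lemma false_of_chordal (c₀ : Cfg G) (hch : G.IsChordal) : False := by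
  suffices H : ∀ n : ℕ, ∀ c' : Cfg G, c'.meas ≤ n → False from H c₀.meas c₀ le_rfl
  intro n
  induction n with
  | zero => intro c' h; have := c'.meas_ge_four; omega
  | succ n ih =>
    intro c' h
    by_cases hnc : ∀ m m', ¬ c'.Chord m m'
    · obtain ⟨emb⟩ := c'.embedding_of_no_chord hnc
      exact (hch c'.meas c'.meas_ge_four).false emb
    · push_neg at hnc
      obtain ⟨m, m', hcd⟩ := hnc
      obtain ⟨c'', hc''⟩ := c'.descent hcd
      exact ih c'' (by omega)

end Cfg

section Walks

variable {G : SimpleGraph V}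

lemma dist_getVert_le (hG : G.Connected) {x y : V} (w : G.Walk x y) :
    ∀ m, G.dist x (w.getVert m) ≤ m := by
  induction w with
  | nil => intro m; simp [Walk.getVert, SimpleGraph.dist_self]
  | @cons a b y h p ih =>
    intro m
    cases m with
    | zero => simp [Walk.getVert]
    | succ m =>
      show G.dist a (p.getVert m) ≤ m + 1
      calc G.dist a (p.getVert m) ≤ G.dist a b + G.dist b (p.getVert m) := hG.dist_triangle
      _ ≤ 1 + m := by
          have h1 : G.dist a b = 1 := dist_eq_one_iff_adj.mpr h
          have h2 := ih m
          omega
      _ = m + 1 := by omega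

lemma getVert_dist_le (hG : G.Connected) {x y : V} (w : G.Walk x y) (m : ℕ) (hm : m ≤ w.length) :
    G.dist (w.getVert m) y ≤ w.length - m := by
  have h1 := dist_getVert_le hG w.reverse (w.length - m)
  rw [Walk.getVert_reverse] at h1
  have e : w.length - (w.length - m) = m := by omega
  rw [e] at h1
  rw [SimpleGraph.dist_comm]
  exact h1

lemma geodesic_getVert (hG : G.Connected) {x y : V} (w : G.Walk x y) (hw : w.length = G.dist x y) (m : ℕ)
    (hm : m ≤ w.length) :
    G.dist x (w.getVert m) = m ∧ G.dist (w.getVert m) y = w.length - m := by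
  have h1 := dist_getVert_le hG w m
  have h2 := getVert_dist_le hG w m hm
  have h3 : G.dist x y ≤ G.dist x (w.getVert m) + G.dist (w.getVert m) y := hG.dist_triangle
  omega

end Walks

end Stmt8Aux


/-- in a connected chordal graph `G`, for distinct vertices `s, t` with
`d = dist_G(s, t)`, each set `D_i` (`0 ≤ i ≤ d`) is a clique. -/
theorem stmt8 {V : Type*} (G : SimpleGraph V) (hG : G.Connected) (hch : G.IsChordal)
    (s t : V) (hst : s ≠ t) :
    ∀ i ≤ G.dist s t, G.IsClique (G.levelSet s t i) := by
  intro i hi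
  rw [SimpleGraph.isClique_iff]
  intro u hu v hv hne
  obtain ⟨hu1, hu2⟩ := hu
  obtain ⟨hv1, hv2⟩ := hv
  by_contra hnadj
  classical
  set d := G.dist s t with hd
  rcases Nat.eq_zero_or_pos i with h0 | hipos
  · subst h0
    have e1 : s = u := hG.dist_eq_zero_iff.mp hu1
    have e2 : s = v := hG.dist_eq_zero_iff.mp hv1
    exact hne (e1.symm.trans e2)
  rcases Nat.lt_or_ge i d with hilt | hige
  swap
  · have e1 : u = t := hG.dist_eq_zero_iff.mp (by omega)
    have e2 : v = t := hG.dist_eq_zero_iff.mp (by omega)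
    exact hne (e1.trans e2.symm)
  have hd0 : 0 < d := by omega
  obtain ⟨p1, hp1⟩ := hG.exists_walk_length_eq_dist s u
  obtain ⟨p2, hp2⟩ := hG.exists_walk_length_eq_dist u t
  obtain ⟨q1, hq1⟩ := hG.exists_walk_length_eq_dist s v
  obtain ⟨q2, hq2⟩ := hG.exists_walk_length_eq_dist v t
  rw [hu1] at hp1
  rw [hu2] at hp2
  rw [hv1] at hq1
  rw [hv2] at hq2
  set wu := p1.append p2 with hwu_def
  set wv := q1.append q2 with hwv_def
  have hwu : wu.length = d := by
    rw [hwu_def, SimpleGraph.Walk.length_append]; omega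
  have hwv : wv.length = d := by
    rw [hwv_def, SimpleGraph.Walk.length_append]; omega
  set f0 : ℕ → V := fun m => wu.getVert m with hf0_def
  set g0 : ℕ → V := fun m => wv.getVert m with hg0_def
  have hfu : f0 i = u := by
    show (p1.append p2).getVert i = u
    rw [SimpleGraph.Walk.getVert_append, if_neg (by omega)]
    have e : i - p1.length = 0 := by omega
    rw [e, SimpleGraph.Walk.getVert_zero]
  have hgv : g0 i = v := by
    show (q1.append q2).getVert i = v
    rw [SimpleGraph.Walk.getVert_append, if_neg (by omega)]
    have e : i - q1.length = 0 := by omega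
    rw [e, SimpleGraph.Walk.getVert_zero]
  have hfl : ∀ m ≤ d, G.dist s (f0 m) = m ∧ G.dist (f0 m) t = d - m := by
    intro m hm
    have h := Stmt8Aux.geodesic_getVert hG wu (by rw [hwu, hd]) m (by omega)
    rw [hwu] at h
    exact h
  have hgl : ∀ m ≤ d, G.dist s (g0 m) = m ∧ G.dist (g0 m) t = d - m := by
    intro m hm
    have h := Stmt8Aux.geodesic_getVert hG wv (by rw [hwv, hd]) m (by omega)
    rw [hwv] at h
    exact h
  have hf00 : f0 0 = s := wu.getVert_zero
  have hg00 : g0 0 = s := wv.getVert_zero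
  have hf0d : f0 d = t := by
    show wu.getVert d = t
    rw [← hwu]
    exact wu.getVert_length
  have hg0d : g0 d = t := by
    show wv.getVert d = t
    rw [← hwv]
    exact wv.getVert_length
  have hP0 : f0 0 = g0 0 := by rw [hf00, hg00]
  set P : ℕ → Prop := fun m => f0 m = g0 m with hP_def
  set j := Nat.findGreatest P (i - 1) with hj_def
  have hPj : P j := Nat.findGreatest_spec (Nat.zero_le _) hP0
  have hjle : j ≤ i - 1 := Nat.findGreatest_le _
  have hjmax : ∀ m, j < m → m ≤ i - 1 → ¬P m := fun m h1 h2 =>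
    Nat.findGreatest_is_greatest h1 h2
  have hQex : ∃ m, i < m ∧ P m := ⟨d, hilt, by show f0 d = g0 d; rw [hf0d, hg0d]⟩
  set k := Nat.find hQex with hk_def
  have hk := Nat.find_spec hQex
  have hkmin : ∀ m, m < k → ¬(i < m ∧ P m) := fun m hm => Nat.find_min hQex hm
  have hkd : k ≤ d := Nat.find_le ⟨hilt, by show f0 d = g0 d; rw [hf0d, hg0d]⟩
  have hik : i < k := hk.1
  have hji : j < i := by omega
  refine Stmt8Aux.Cfg.false_of_chordal ?_ hch
  exact
    { lv := fun x => (G.dist s x : ℤ)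
      hlv := by
        intro x y hxy
        show (↑(G.dist s x) : ℤ) ≤ ↑(G.dist s y) + 1
        have h1 : G.dist y x = 1 := SimpleGraph.dist_eq_one_iff_adj.mpr hxy.symm
        have h2 : G.dist s x ≤ G.dist s y + G.dist y x := hG.dist_triangle
        omega
      f := fun r => f0 (j + r)
      g := fun r => g0 (j + r)
      L := k - j
      I := i - j
      hIL := by omega
      hne := by
        have e : j + (i - j) = i := by omega
        show f0 (j + (i - j)) ≠ g0 (j + (i - j))
        rw [e, hfu, hgv]
        exact hne
      hnadj := by
        have e : j + (i - j) = i := by omega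
        show ¬ G.Adj (f0 (j + (i - j))) (g0 (j + (i - j)))
        rw [e, hfu, hgv]
        exact hnadj
      hf := by
        intro r hr
        have h1 : j + r < wu.length := by omega
        have h2 := wu.adj_getVert_succ h1
        show G.Adj (f0 (j + r)) (f0 (j + (r + 1)))
        have e : j + (r + 1) = (j + r) + 1 := by omega
        rw [e]
        exact h2
      hg := by
        intro r hr
        have h1 : j + r < wv.length := by omega
        have h2 := wv.adj_getVert_succ h1
        show G.Adj (g0 (j + r)) (g0 (j + (r + 1)))
        have e : j + (r + 1) = (j + r) + 1 := by omega
        rw [e]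
        exact h2
      hlf := by
        intro r hr
        show (↑(G.dist s (f0 (j + r))) : ℤ) = ↑(G.dist s (f0 (j + 0))) + r
        have h1 := (hfl (j + r) (by omega)).1
        have h2 := (hfl (j + 0) (by omega)).1
        omega
      hlg := by
        intro r hr
        show (↑(G.dist s (g0 (j + r))) : ℤ) = ↑(G.dist s (g0 (j + 0))) + r
        have h1 := (hgl (j + r) (by omega)).1
        have h2 := (hgl (j + 0) (by omega)).1
        omega
      hl0 := by
        show (↑(G.dist s (f0 (j + 0))) : ℤ) = ↑(G.dist s (g0 (j + 0)))
        have h1 := (hfl (j + 0) (by omega)).1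
        have h2 := (hgl (j + 0) (by omega)).1
        omega
      hstart := Or.inl hPj
      hend := by
        left
        have e : j + (k - j) = k := by omega
        show f0 (j + (k - j)) = g0 (j + (k - j))
        rw [e]
        exact hk.2
      hcross := by
        intro r hr r' hr' hEq0
        have hEq : f0 (j + r) = g0 (j + r') := hEq0
        have h1 := (hfl (j + r) (by omega)).1
        have h2 := (hgl (j + r') (by omega)).1
        rw [hEq] at h1
        have hrr : r = r' := by omega
        subst hrr
        rcases Nat.eq_zero_or_pos r with h0 | hpos
        · left; exact ⟨h0, h0⟩
        · rcases Nat.lt_or_ge (j + r) i with hlt | hge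
          · exact absurd hEq (hjmax (j + r) (by omega) (by omega))
          · rcases Nat.eq_or_lt_of_le hge with heq | hlt2
            · exfalso
              apply hne
              rw [← hfu, ← hgv, heq]
              exact hEq
            · rcases Nat.lt_or_ge (j + r) k with hltk | hgek
              · exact absurd ⟨hlt2, hEq⟩ (hkmin (j + r) hltk)
              · right
                constructor <;> omega }
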